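/- Let A = [[a,b],[c,d]] be an invertible 2×2 matrix over a field F and let P(λ) and Q(λ) be matrix polynomials over F of grades g₁ and g₂ respectively, such that the product P(λ)Q(λ) is defined. Then the Möbius transformation of the product equals the product of the Möbius transformations: M_A[PQ](λ) = M_A[P](λ) · M_A[Q](λ), where PQ is considered as a matrix polynomial of grade g₁+g₂. -/

import Mathlib

open Polynomial

/-- The Möbius transformation of a matrix polynomial `P` (of grade `g`) induced by the
2×2 matrix `A = [[a,b],[c,d]]`:  `M_A[P](λ) = ∑_{i=0}^g P_i (aλ+b)^i (cλ+d)^{g-i}`. -/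
noncomputable def mobius {F : Type*} [Field F] {m n : Type*}
    (a b c d : F) (g : ℕ) (P : Matrix m n (Polynomial F)) : Matrix m n (Polynomial F) :=
  ∑ i ∈ Finset.range (g + 1),
    ((C a * X + C b) ^ i * (C c * X + C d) ^ (g - i)) • P.map (fun p => C (p.coeff i))

lemma mobius_key {F : Type*} [Field F] (A V : Polynomial F) (g₁ g₂ : ℕ) (q r : Polynomial F)
    (hq : q.degree ≤ (g₁ : ℕ)) (hr : r.degree ≤ (g₂ : ℕ)) :
    ∑ k ∈ Finset.range (g₁ + g₂ + 1), A ^ k * V ^ (g₁ + g₂ - k) * C ((q * r).coeff k)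
    = (∑ i ∈ Finset.range (g₁ + 1), A ^ i * V ^ (g₁ - i) * C (q.coeff i)) *
      (∑ j ∈ Finset.range (g₂ + 1), A ^ j * V ^ (g₂ - j) * C (r.coeff j)) := by
  set G := g₁ + g₂ with hG
  set f : ℕ × ℕ → Polynomial F := fun x =>
    A ^ (x.1 + x.2) * V ^ (G - (x.1 + x.2)) * (C (q.coeff x.1) * C (r.coeff x.2)) with hf
  have hcq : ∀ i, g₁ < i → q.coeff i = 0 := fun i hi =>
    coeff_eq_zero_of_degree_lt (lt_of_le_of_lt hq (by exact_mod_cast hi))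
  have hcr : ∀ j, g₂ < j → r.coeff j = 0 := fun j hj =>
    coeff_eq_zero_of_degree_lt (lt_of_le_of_lt hr (by exact_mod_cast hj))
  calc ∑ k ∈ Finset.range (G + 1), A ^ k * V ^ (G - k) * C ((q * r).coeff k)
      = ∑ k ∈ Finset.range (G + 1), ∑ x ∈ Finset.HasAntidiagonal.antidiagonal k, f x := by
        refine Finset.sum_congr rfl fun k _ => ?_
        rw [coeff_mul, map_sum, Finset.mul_sum]
        refine Finset.sum_congr rfl fun x hx => ?_
        have hxk : x.1 + x.2 = k := Finset.HasAntidiagonal.mem_antidiagonal.mp hx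
        rw [hf]; simp only [hxk, map_mul]
    _ = ∑ x ∈ (Finset.range (G + 1)).biUnion (fun k => Finset.HasAntidiagonal.antidiagonal k), f x := by
        refine (Finset.sum_biUnion ?_).symm
        intro k1 _ k2 _ hne
        refine Finset.disjoint_left.mpr fun x h1 h2 => hne ?_
        rw [← Finset.HasAntidiagonal.mem_antidiagonal.mp h1, Finset.HasAntidiagonal.mem_antidiagonal.mp h2]
    _ = ∑ x ∈ Finset.range (g₁ + 1) ×ˢ Finset.range (g₂ + 1), f x := by
        refine (Finset.sum_subset ?_ ?_).symm
        · intro x hx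
          simp only [Finset.mem_product, Finset.mem_range] at hx
          exact Finset.mem_biUnion.mpr ⟨x.1 + x.2, Finset.mem_range.mpr (by omega),
            Finset.HasAntidiagonal.mem_antidiagonal.mpr rfl⟩
        · intro x hx hxn
          simp only [Finset.mem_product, Finset.mem_range, not_and_or, not_lt] at hxn
          rcases hxn with h | h
          · rw [hf]; simp [hcq x.1 (by omega)]
          · rw [hf]; simp [hcr x.2 (by omega)]
    _ = _ := by
        rw [Finset.sum_product, Finset.sum_mul_sum]
        refine Finset.sum_congr rfl fun i hi => Finset.sum_congr rfl fun j hj => ?_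
        simp only [Finset.mem_range] at hi hj
        have h1 : G - (i + j) = (g₁ - i) + (g₂ - j) := by omega
        rw [hf]; simp only [h1, pow_add]; ring

/-- Möbius transformations respect products of matrix polynomials:
`M_A[PQ] = M_A[P] · M_A[Q]`, where `P`, `Q` have grades `g₁`, `g₂` and `PQ` is considered
as a matrix polynomial of grade `g₁ + g₂`. -/
theorem mobius_mul {F : Type*} [Field F] {m n p : Type*} [Fintype n]
    (a b c d : F) (hA : a * d - b * c ≠ 0) (g₁ g₂ : ℕ)
    (P : Matrix m n (Polynomial F)) (Q : Matrix n p (Polynomial F))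
    (hP : ∀ i j, (P i j).degree ≤ (g₁ : ℕ)) (hQ : ∀ i j, (Q i j).degree ≤ (g₂ : ℕ)) :
    mobius a b c d (g₁ + g₂) (P * Q) = mobius a b c d g₁ P * mobius a b c d g₂ Q := by
  refine Matrix.ext fun i j => ?_
  simp only [mobius, Matrix.sum_apply, Matrix.smul_apply, Matrix.map_apply, smul_eq_mul,
    Matrix.mul_apply]
  calc ∑ k ∈ Finset.range (g₁ + g₂ + 1),
        (C a * X + C b) ^ k * (C c * X + C d) ^ (g₁ + g₂ - k) *
          C ((∑ x, P i x * Q x j).coeff k)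
      = ∑ x, ∑ k ∈ Finset.range (g₁ + g₂ + 1),
          (C a * X + C b) ^ k * (C c * X + C d) ^ (g₁ + g₂ - k) *
            C ((P i x * Q x j).coeff k) := by
        rw [Finset.sum_comm]
        refine Finset.sum_congr rfl fun k _ => ?_
        rw [finset_sum_coeff, map_sum, Finset.mul_sum]
    _ = ∑ x, (∑ i' ∈ Finset.range (g₁ + 1),
            (C a * X + C b) ^ i' * (C c * X + C d) ^ (g₁ - i') * C ((P i x).coeff i')) *
          (∑ j' ∈ Finset.range (g₂ + 1),
            (C a * X + C b) ^ j' * (C c * X + C d) ^ (g₂ - j') * C ((Q x j).coeff j')) := by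
        refine Finset.sum_congr rfl fun x _ => ?_
        exact mobius_key _ _ g₁ g₂ _ _ (hP i x) (hQ x j)
    _ = _ := by
        refine Finset.sum_congr rfl fun x _ => ?_
        rw [Finset.sum_mul_sum]
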